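/- (Positivity of the Yosida pairing.) For every λ > 0, every nondecreasing Lipschitz-continuous function g : ℝ → ℝ with g(0) = 0, and every u ∈ L²(D), one has ⟨A_λ u, g ∘ u⟩_{L²(D)} ≥ 0. (In the paper this is applied with g = β_λ, the Yosida approximation of a maximal monotone graph β ⊆ ℝ × ℝ with 0 ∈ β(0), which is such a function.) -/

import Mathlib

open RealInnerProductSpace MeasureTheory

namespace Statement7Aux

noncomputable def G (g : ℝ → ℝ) (s : ℝ) : ℝ := ∫ t in (0:ℝ)..s, g t



variable {g : ℝ → ℝ} {Lg : NNReal}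

lemma G_minorant (hgLip : LipschitzWith Lg g) (hgmono : Monotone g) (a b : ℝ) :
    G g a + g a * (b - a) ≤ G g b := by
  have hint : ∀ x y : ℝ, IntervalIntegrable g volume x y :=
    fun x y => hgLip.continuous.intervalIntegrable x y
  have h : G g b - G g a = ∫ t in a..b, g t := by
    rw [G, G, ← intervalIntegral.integral_interval_sub_left (hint 0 b) (hint 0 a)]
  rcases le_total a b with hab | hab
  · have h1 : g a * (b - a) ≤ ∫ t in a..b, g t := by
      have := intervalIntegral.integral_mono_on hab (intervalIntegrable_const (c := g a))
        (hint a b) (fun x hx => hgmono hx.1)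
      rw [intervalIntegral.integral_const, smul_eq_mul] at this
      linarith
    linarith
  · have h1 : ∫ t in b..a, g t ≤ g a * (a - b) := by
      have := intervalIntegral.integral_mono_on hab (hint b a)
        (intervalIntegrable_const (c := g a)) (fun x hx => hgmono hx.2)
      rw [intervalIntegral.integral_const, smul_eq_mul] at this
      linarith
    have h2 : (∫ t in a..b, g t) = -∫ t in b..a, g t := intervalIntegral.integral_symm b a
    linarith

lemma G_nonneg (hgLip : LipschitzWith Lg g) (hgmono : Monotone g) (hg0 : g 0 = 0) (s : ℝ) :
    0 ≤ G g s := by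
  have := G_minorant hgLip hgmono 0 s
  simpa [G, hg0] using this

lemma abs_g_le (hgLip : LipschitzWith Lg g) (hg0 : g 0 = 0) (t : ℝ) : |g t| ≤ Lg * |t| := by
  have := hgLip.dist_le_mul t 0
  simpa [Real.dist_eq, hg0] using this

lemma G_le_sq (hgLip : LipschitzWith Lg g) (hgmono : Monotone g) (hg0 : g 0 = 0) (s : ℝ) :
    G g s ≤ Lg * s ^ 2 := by
  have hint : ∀ x y : ℝ, IntervalIntegrable g volume x y :=
    fun x y => hgLip.continuous.intervalIntegrable x y
  have hintL : ∀ x y : ℝ, IntervalIntegrable (fun t => (Lg : ℝ) * t) volume x y :=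
    fun x y => (continuous_const.mul continuous_id).intervalIntegrable x y
  have hLid : ∀ x y : ℝ, (∫ t in x..y, (Lg : ℝ) * t) = Lg * (y ^ 2 - x ^ 2) / 2 := by
    intro x y
    rw [intervalIntegral.integral_const_mul, integral_id]
    ring
  rcases le_total 0 s with hs | hs
  · have h1 : G g s ≤ ∫ t in (0:ℝ)..s, (Lg : ℝ) * t := by
      refine intervalIntegral.integral_mono_on hs (hint 0 s) (hintL 0 s) (fun t ht => ?_)
      have := abs_g_le hgLip hg0 t
      have h2 : |t| = t := abs_of_nonneg ht.1
      calc g t ≤ |g t| := le_abs_self _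
        _ ≤ Lg * |t| := this
        _ = Lg * t := by rw [h2]
    rw [hLid] at h1
    nlinarith [sq_nonneg s, Lg.coe_nonneg]
  · have h1 : (∫ t in s..(0:ℝ), (Lg:ℝ) * t) ≤ ∫ t in s..(0:ℝ), g t := by
      refine intervalIntegral.integral_mono_on hs (hintL s 0) (hint s 0) (fun t ht => ?_)
      have := abs_g_le hgLip hg0 t
      have h2 : |t| = -t := abs_of_nonpos ht.2
      have h4 : -|g t| ≤ g t := neg_abs_le _
      have h5 : (Lg:ℝ) * |t| = -((Lg:ℝ) * t) := by rw [h2]; ring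
      linarith
    have h2 : G g s = -∫ t in s..(0:ℝ), g t := by
      rw [G]; exact intervalIntegral.integral_symm s 0
    rw [hLid] at h1
    have := Lg.coe_nonneg
    nlinarith [sq_nonneg s]

lemma G_continuous (hgLip : LipschitzWith Lg g) : Continuous (G g) :=
  intervalIntegral.continuous_primitive (fun x y => hgLip.continuous.intervalIntegrable x y) 0


lemma G_le_of_rat (hgLip : LipschitzWith Lg g) (hgmono : Monotone g) (s M : ℝ)
    (h : ∀ q : ℚ, g q * (s - q) + G g q ≤ M) : G g s ≤ M := by
  refine le_of_forall_pos_le_add (fun ε hε => ?_)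
  set K : ℝ := (Lg : ℝ) with hK
  have hK0 : 0 ≤ K := Lg.coe_nonneg
  set δ : ℝ := min 1 (ε / (K + 1)) with hδ
  have hδ0 : 0 < δ := lt_min one_pos (div_pos hε (by linarith))
  obtain ⟨q, hq1, hq2⟩ := exists_rat_btwn (show s - δ < s by linarith)
  have hqs : |s - (q:ℝ)| ≤ δ := by
    rw [abs_of_nonneg (by linarith)]; linarith
  -- key: G g s ≤ g q * (s - q) + G g q + K * (s - q)^2
  have h1 := G_minorant hgLip hgmono s q
  have h2 : |g q - g s| ≤ K * |(q:ℝ) - s| := by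
    have := hgLip.dist_le_mul (q:ℝ) s
    simpa [Real.dist_eq] using this
  have h3 : -(K * (s - q)^2) ≤ (g q - g s) * (s - q) := by
    have habs : |(g q - g s) * (s - q)| ≤ K * (s - q)^2 := by
      rw [abs_mul]
      calc |g q - g s| * |s - (q:ℝ)| ≤ (K * |(q:ℝ) - s|) * |s - (q:ℝ)| :=
            mul_le_mul_of_nonneg_right h2 (abs_nonneg _)
        _ = K * (s - q)^2 := by rw [abs_sub_comm ((q:ℝ)) s, mul_assoc, ← abs_mul, ← sq, abs_of_nonneg (sq_nonneg _)]
    linarith [neg_abs_le ((g q - g s) * (s - q))]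
  have hkey : G g s ≤ g q * (s - q) + G g q + K * (s - q)^2 := by nlinarith [h q]
  have h4 : K * (s - (q:ℝ))^2 ≤ ε := by
    have hd1 : δ ≤ 1 := min_le_left _ _
    have hd2 : δ ≤ ε / (K + 1) := min_le_right _ _
    have h5 : (s - (q:ℝ))^2 ≤ δ^2 := by
      rw [← sq_abs]
      exact pow_le_pow_left₀ (abs_nonneg _) hqs 2
    have hE0 : 0 ≤ ε / (K + 1) := le_of_lt (div_pos hε (by linarith))
    have hE : (ε / (K + 1)) * (K + 1) = ε := div_mul_cancel₀ _ (by linarith)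
    calc K * (s - (q:ℝ))^2 ≤ K * δ^2 := by nlinarith
      _ = K * (δ * δ) := by ring
      _ ≤ K * ((ε / (K+1)) * 1) := by
          refine mul_le_mul_of_nonneg_left (mul_le_mul hd2 hd1 hδ0.le hE0) hK0
      _ ≤ ε := by nlinarith
  linarith [h q]


variable {α : Type*} [MeasurableSpace α] {μ : Measure α}

lemma T_nonneg_bdd (T : Lp ℝ 1 μ →ₗ[ℝ] Lp ℝ 1 μ)
    (hsm : ∀ f : Lp ℝ 1 μ, (∀ᵐ x ∂μ, 0 ≤ f x ∧ f x ≤ 1) → (∀ᵐ x ∂μ, 0 ≤ T f x ∧ T f x ≤ 1))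
    (f : Lp ℝ 1 μ) (c : ℝ) (hc : 0 < c) (hf : ∀ᵐ x ∂μ, 0 ≤ f x ∧ f x ≤ c) :
    ∀ᵐ x ∂μ, 0 ≤ T f x := by
  set f' : Lp ℝ 1 μ := c⁻¹ • f with hf'
  have hcoe : (f' : α → ℝ) =ᵐ[μ] fun x => c⁻¹ * f x := Lp.coeFn_smul c⁻¹ f
  have h01 : ∀ᵐ x ∂μ, 0 ≤ f' x ∧ f' x ≤ 1 := by
    filter_upwards [hcoe, hf] with x hx ⟨h1, h2⟩
    rw [hx]
    constructor
    · positivity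
    · rw [inv_mul_le_iff₀ hc]; linarith
  have h2 := hsm f' h01
  have hTf : T f = c • T f' := by
    rw [hf', _root_.map_smul, smul_smul, mul_inv_cancel₀ hc.ne', one_smul]
  have hcoe2 : (T f : α → ℝ) =ᵐ[μ] fun x => c * (T f' x) := by
    rw [hTf]; exact Lp.coeFn_smul c (T f')
  filter_upwards [hcoe2, h2] with x hx ⟨h3, _⟩
  rw [hx]; positivity

lemma T_nonneg [IsFiniteMeasure μ] (T : Lp ℝ 1 μ →ₗ[ℝ] Lp ℝ 1 μ)
    (hcontr : ∀ f : Lp ℝ 1 μ, ‖T f‖ ≤ ‖f‖)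
    (hsm : ∀ f : Lp ℝ 1 μ, (∀ᵐ x ∂μ, 0 ≤ f x ∧ f x ≤ 1) → (∀ᵐ x ∂μ, 0 ≤ T f x ∧ T f x ≤ 1))
    (f : Lp ℝ 1 μ) (hf : ∀ᵐ x ∂μ, 0 ≤ f x) :
    ∀ᵐ x ∂μ, 0 ≤ T f x := by
  -- truncations
  set fn : ℕ → Lp ℝ 1 μ := fun n => f ⊓ Lp.const 1 μ ((n:ℝ)+1) with hfn
  set rn : ℕ → Lp ℝ 1 μ := fun n => f - fn n with hrn
  have hfn_coe : ∀ n, (fn n : α → ℝ) =ᵐ[μ] fun x => min (f x) ((n:ℝ)+1) := by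
    intro n
    filter_upwards [Lp.coeFn_inf f (Lp.const 1 μ ((n:ℝ)+1)),
      (Lp.coeFn_const _ _ _ : (Lp.const 1 μ ((n:ℝ)+1) : α → ℝ) =ᵐ[μ] _)] with x h1 h2
    simp only [hfn, h1, Pi.inf_apply, h2, Function.const_apply]
  have hrn_coe : ∀ n, (rn n : α → ℝ) =ᵐ[μ] fun x => f x - min (f x) ((n:ℝ)+1) := by
    intro n
    filter_upwards [Lp.coeFn_sub f (fn n), hfn_coe n] with x h1 h2
    rw [hrn]; simp only [h1, Pi.sub_apply, h2]
  have hTfn : ∀ n, ∀ᵐ x ∂μ, 0 ≤ T (fn n) x := by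
    intro n
    refine T_nonneg_bdd T hsm (fn n) ((n:ℝ)+1) (by positivity) ?_
    filter_upwards [hfn_coe n, hf] with x h1 h2
    rw [h1]
    exact ⟨le_min h2 (by positivity), min_le_right _ _⟩
  have hrn_norm : ∀ n, ‖rn n‖ = ∫ x, (f x - min (f x) ((n:ℝ)+1)) ∂μ := by
    intro n
    rw [L1.norm_eq_integral_norm]
    refine integral_congr_ae ?_
    filter_upwards [hrn_coe n] with x h1
    rw [h1, Real.norm_eq_abs, abs_of_nonneg (sub_nonneg.2 (min_le_left _ _))]
  have hmeas : ∀ n : ℕ, AEStronglyMeasurable (fun x => f x - min (f x) ((n:ℝ)+1)) μ := by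
    intro n
    exact (Lp.aestronglyMeasurable f).sub
      (((Lp.aestronglyMeasurable f).aemeasurable.min aemeasurable_const).aestronglyMeasurable)
  have hlim : Filter.Tendsto (fun n : ℕ => ∫ x, (f x - min (f x) ((n:ℝ)+1)) ∂μ)
      Filter.atTop (nhds 0) := by
    have h := tendsto_integral_of_dominated_convergence (μ := μ)
      (F := fun (n : ℕ) x => f x - min (f x) ((n:ℝ)+1)) (f := fun _ => (0:ℝ))
      (bound := fun x => |f x|) hmeas ((L1.integrable_coeFn f).abs) ?_ ?_
    · simpa using h
    · intro n
      filter_upwards [hf] with x hx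
      rw [Real.norm_eq_abs]
      rcases le_total (f x) ((n:ℝ)+1) with h | h
      · simp [min_eq_left h]
      · rw [min_eq_right h, abs_of_nonneg (by linarith), abs_of_nonneg hx]; linarith
    · refine Filter.Eventually.of_forall (fun x => ?_)
      refine tendsto_atTop_of_eventually_const (i₀ := ⌈f x⌉₊) (fun n hn => ?_)
      have hfx : f x ≤ (n:ℝ)+1 := by
        have h1 : f x ≤ (⌈f x⌉₊ : ℝ) := Nat.le_ceil _
        have h2 : (⌈f x⌉₊ : ℝ) ≤ (n : ℝ) := by exact_mod_cast hn
        linarith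
      simp [min_eq_left hfx]
  set N : α → ℝ := fun x => max (-(T f x)) 0 with hN
  have hN_nonneg : 0 ≤ᵐ[μ] N := Filter.Eventually.of_forall (fun x => le_max_right _ _)
  have hN_meas : AEStronglyMeasurable N μ :=
    ((Lp.aestronglyMeasurable (T f)).aemeasurable.neg.max aemeasurable_const).aestronglyMeasurable
  have hN_int : Integrable N μ := by
    refine Integrable.mono' (L1.integrable_coeFn (T f)).abs hN_meas ?_
    refine Filter.Eventually.of_forall (fun x => ?_)
    rw [Real.norm_eq_abs, hN, abs_of_nonneg (le_max_right _ _)]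
    exact max_le (neg_le_abs _) (abs_nonneg _)
  have hNle : ∀ n, ∫ x, N x ∂μ ≤ ‖rn n‖ := by
    intro n
    have hTsum : T (fn n) + T (rn n) = T f := by
      rw [hrn, ← map_add, add_sub_cancel]
    have hsplit : (T f : α → ℝ) =ᵐ[μ] fun x => T (fn n) x + T (rn n) x := by
      rw [← hTsum]
      exact Lp.coeFn_add _ _
    have h1 : ∀ᵐ x ∂μ, N x ≤ |T (rn n) x| := by
      filter_upwards [hsplit, hTfn n] with x hx1 hx2
      rw [hN]
      refine max_le ?_ (abs_nonneg _)
      rw [hx1]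
      have := neg_abs_le (T (rn n) x)
      linarith
    calc ∫ x, N x ∂μ ≤ ∫ x, |T (rn n) x| ∂μ :=
        integral_mono_ae hN_int (L1.integrable_coeFn (T (rn n))).abs h1
      _ = ‖T (rn n)‖ := by rw [L1.norm_eq_integral_norm]; simp [Real.norm_eq_abs]
      _ ≤ ‖rn n‖ := hcontr _
  have hnorm_lim : Filter.Tendsto (fun n => ‖rn n‖) Filter.atTop (nhds 0) := by
    have heq : (fun n : ℕ => ‖rn n‖) = fun n : ℕ => ∫ x, (f x - min (f x) ((n:ℝ)+1)) ∂μ := funext hrn_norm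
    rw [heq]; exact hlim
  have hint0 : ∫ x, N x ∂μ ≤ 0 := ge_of_tendsto' hnorm_lim hNle
  have hintN : ∫ x, N x ∂μ = 0 := le_antisymm hint0 (integral_nonneg_of_ae hN_nonneg)
  have hN0 : N =ᵐ[μ] 0 := (integral_eq_zero_iff_of_nonneg_ae hN_nonneg hN_int).mp hintN
  filter_upwards [hN0] with x hx
  have h1 : -(T f x) ≤ N x := le_max_left _ _
  rw [hx] at h1
  simpa using h1

lemma T_mono [IsFiniteMeasure μ] (T : Lp ℝ 1 μ →ₗ[ℝ] Lp ℝ 1 μ)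
    (hcontr : ∀ f : Lp ℝ 1 μ, ‖T f‖ ≤ ‖f‖)
    (hsm : ∀ f : Lp ℝ 1 μ, (∀ᵐ x ∂μ, 0 ≤ f x ∧ f x ≤ 1) → (∀ᵐ x ∂μ, 0 ≤ T f x ∧ T f x ≤ 1))
    (f h : Lp ℝ 1 μ) (hfh : ∀ᵐ x ∂μ, f x ≤ h x) :
    ∀ᵐ x ∂μ, T f x ≤ T h x := by
  have h1 : ∀ᵐ x ∂μ, 0 ≤ (h - f) x := by
    filter_upwards [Lp.coeFn_sub h f, hfh] with x hx1 hx2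
    rw [hx1]; simp [hx2]
  have h2 := T_nonneg T hcontr hsm (h - f) h1
  have h3 : T h - T f = T (h - f) := by rw [map_sub]
  filter_upwards [h2, Lp.coeFn_sub (T h) (T f)] with x hx1 hx2
  rw [← h3] at hx1
  rw [hx2] at hx1
  simp only [Pi.sub_apply] at hx1
  linarith

end Statement7Aux



open Statement7Aux in
set_option maxHeartbeats 1000000 in

/-- Positivity of the Yosida pairing, Lemma 6.2 of the paper.
`D ⊆ ℝ^d` is a bounded domain with Lebesgue measure `μ`, `H := L²(D)`.
`V ⊆ H ⊆ V'` is a Gelfand triple (dense continuous injection `e : V → L²(D)`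
of real separable Hilbert spaces), `A : V → V'` is the bounded coercive
operator encoded by the continuous bilinear form `a v w = ⟨Av, w⟩`,
`J : ℝ → L²(D) → V` encodes the resolvents `J_λ = (I + λ A₂)⁻¹` of the part
`A₂` of `A` in `H`, and the Yosida approximation is `A_λ u = λ⁻¹ (u - J_λ u)`.
For each `λ > 0` the resolvent extends to a linear contraction `S λ` of
`L¹(D)` which is sub-Markovian.

Claim: for every `λ > 0`, every nondecreasing Lipschitz function `g : ℝ → ℝ`
with `g 0 = 0`, and every `u ∈ L²(D)`, one has `⟪A_λ u, g ∘ u⟫_{L²(D)} ≥ 0`. -/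
theorem statement7
    {d : ℕ} (D : Set (Fin d → ℝ)) (hDmeas : MeasurableSet D)
    (hDopen : IsOpen D) (hDbdd : Bornology.IsBounded D) (hDne : D.Nonempty)
    (μ : Measure (Fin d → ℝ)) (hμ : μ = volume.restrict D)
    {V : Type*} [NormedAddCommGroup V] [InnerProductSpace ℝ V]
    [CompleteSpace V] [TopologicalSpace.SeparableSpace V]
    (e : V →L[ℝ] Lp ℝ 2 μ) (he : Function.Injective e) (hdense : DenseRange e)
    (a : V →L[ℝ] V →L[ℝ] ℝ) (C : ℝ) (hC : 0 < C)
    (hcoer : ∀ v : V, C * ‖v‖ ^ 2 ≤ a v v)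
    (J : ℝ → Lp ℝ 2 μ → V)
    (hJ : ∀ lam : ℝ, 0 < lam → ∀ f : Lp ℝ 2 μ, ∃ h : Lp ℝ 2 μ,
      (∀ w : V, a (J lam f) w = ⟪h, e w⟫) ∧ e (J lam f) + lam • h = f)
    (S : ℝ → (Lp ℝ 1 μ →ₗ[ℝ] Lp ℝ 1 μ))
    (hScontr : ∀ lam : ℝ, 0 < lam → ∀ f : Lp ℝ 1 μ, ‖S lam f‖ ≤ ‖f‖)
    (hSsubMarkov : ∀ lam : ℝ, 0 < lam → ∀ f : Lp ℝ 1 μ,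
      (∀ᵐ x ∂μ, 0 ≤ f x ∧ f x ≤ 1) →
      (∀ᵐ x ∂μ, 0 ≤ S lam f x ∧ S lam f x ≤ 1))
    (hSext : ∀ lam : ℝ, 0 < lam → ∀ (f2 : Lp ℝ 2 μ) (f1 : Lp ℝ 1 μ),
      (f1 : (Fin d → ℝ) → ℝ) =ᵐ[μ] f2 →
      (S lam f1 : (Fin d → ℝ) → ℝ) =ᵐ[μ] e (J lam f2))
    (g : ℝ → ℝ) (Lg : NNReal) (hgLip : LipschitzWith Lg g)
    (hgmono : Monotone g) (hg0 : g 0 = 0) :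
    ∀ lam : ℝ, 0 < lam → ∀ u : Lp ℝ 2 μ,
      0 ≤ ⟪lam⁻¹ • (u - e (J lam u)), hgLip.compLp hg0 u⟫ := by
  intro lam hlam u
  haveI hfin : IsFiniteMeasure μ := by
    constructor
    rw [hμ, Measure.restrict_apply_univ]
    exact hDbdd.measure_lt_top
  set v : Lp ℝ 2 μ := e (J lam u) with hv
  set gu : Lp ℝ 2 μ := hgLip.compLp hg0 u with hgudef
  rw [real_inner_smul_left]
  refine mul_nonneg (inv_nonneg.2 hlam.le) ?_
  -- integrability facts
  have hGu_int : Integrable (fun x => G g (u x)) μ := by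
    refine Integrable.mono' (((Lp.memLp u).integrable_sq).const_mul (Lg : ℝ)) ?_ ?_
    · exact (G_continuous hgLip).comp_aestronglyMeasurable (Lp.aestronglyMeasurable u)
    · refine Filter.Eventually.of_forall fun x => ?_
      rw [Real.norm_eq_abs, abs_of_nonneg (G_nonneg hgLip hgmono hg0 _)]
      exact G_le_sq hgLip hgmono hg0 _
  have hGv_int : Integrable (fun x => G g (v x)) μ := by
    refine Integrable.mono' (((Lp.memLp v).integrable_sq).const_mul (Lg : ℝ)) ?_ ?_
    · exact (G_continuous hgLip).comp_aestronglyMeasurable (Lp.aestronglyMeasurable v)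
    · refine Filter.Eventually.of_forall fun x => ?_
      rw [Real.norm_eq_abs, abs_of_nonneg (G_nonneg hgLip hgmono hg0 _)]
      exact G_le_sq hgLip hgmono hg0 _
  have hprod : Integrable (fun x => ((u - v : Lp ℝ 2 μ) x) * gu x) μ := by
    have h := L2.integrable_inner (𝕜 := ℝ) (u - v) gu
    simpa [RCLike.inner_apply, mul_comm] using h
  have hform : ⟪u - v, gu⟫ = ∫ x, ((u - v : Lp ℝ 2 μ) x) * gu x ∂μ := by
    rw [L2.inner_def]
    refine integral_congr_ae (Filter.Eventually.of_forall fun x => ?_)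
    simp [RCLike.inner_apply, mul_comm]
  have hpt : ∀ᵐ x ∂μ, G g (u x) - G g (v x) ≤ ((u - v : Lp ℝ 2 μ) x) * gu x := by
    filter_upwards [Lp.coeFn_sub u v, hgLip.coeFn_compLp hg0 u] with x h1 h2
    have h3 := G_minorant hgLip hgmono (u x) (v x)
    rw [h1, h2]
    simp only [Pi.sub_apply, Function.comp_apply]
    nlinarith [h3]
  -- the key inequality ∫ G(v) ≤ ∫ G(u)
  have hu1m : MemLp (u : (Fin d → ℝ) → ℝ) 1 μ :=
    (Lp.memLp u).mono_exponent (by norm_num)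
  set u₁ : Lp ℝ 1 μ := hu1m.toLp _ with hu1def
  have hu1 : (u₁ : (Fin d → ℝ) → ℝ) =ᵐ[μ] u := hu1m.coeFn_toLp
  have hvS : (S lam u₁ : (Fin d → ℝ) → ℝ) =ᵐ[μ] v := hSext lam hlam u u₁ hu1
  have hGuF : MemLp (fun x => G g (u x)) 1 μ := memLp_one_iff_integrable.mpr hGu_int
  set F : Lp ℝ 1 μ := hGuF.toLp _ with hFdef
  have hF : (F : (Fin d → ℝ) → ℝ) =ᵐ[μ] fun x => G g (u x) := hGuF.coeFn_toLp
  set one : Lp ℝ 1 μ := Lp.const 1 μ (1:ℝ) with honedef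
  have hone : (one : (Fin d → ℝ) → ℝ) =ᵐ[μ] fun _ => 1 := Lp.coeFn_const _ _ _
  have hTone : ∀ᵐ x ∂μ, 0 ≤ S lam one x ∧ S lam one x ≤ 1 := by
    refine hSsubMarkov lam hlam one ?_
    filter_upwards [hone] with x hx
    rw [hx]; exact ⟨zero_le_one, le_refl 1⟩
  have hG0 : G g 0 = 0 := intervalIntegral.integral_same
  have hrat : ∀ q : ℚ, ∀ᵐ x ∂μ, g q * ((S lam u₁ : (Fin d → ℝ) → ℝ) x - q) + G g q ≤
      (S lam F : (Fin d → ℝ) → ℝ) x := by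
    intro q
    set bq : ℝ := G g q - q * g q with hbqdef
    have hbq : bq ≤ 0 := by
      have := G_minorant hgLip hgmono (q : ℝ) 0
      rw [hG0] at this
      nlinarith [this]
    set hq : Lp ℝ 1 μ := g q • u₁ + bq • one with hhqdef
    have hq_le_F : ∀ᵐ x ∂μ, (hq : (Fin d → ℝ) → ℝ) x ≤ F x := by
      filter_upwards [Lp.coeFn_add (g q • u₁) (bq • one), Lp.coeFn_smul (g q : ℝ) u₁,
        Lp.coeFn_smul bq one, hu1, hone, hF] with x h1 h2 h3 h4 h5
      intro h6
      rw [h1]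
      simp only [Pi.add_apply]
      rw [h2, h3]
      simp only [Pi.smul_apply, smul_eq_mul]
      rw [h4, h5, h6]
      have := G_minorant hgLip hgmono (q : ℝ) ((u : (Fin d → ℝ) → ℝ) x)
      nlinarith [this]
    have hmono := T_mono (S lam) (hScontr lam hlam) (hSsubMarkov lam hlam) hq F hq_le_F
    have hmap : S lam hq = g q • S lam u₁ + bq • S lam one := by
      rw [hhqdef, map_add, _root_.map_smul, _root_.map_smul]
    filter_upwards [hmono, Lp.coeFn_add (g q • S lam u₁) (bq • S lam one),
      Lp.coeFn_smul (g q : ℝ) (S lam u₁), Lp.coeFn_smul bq (S lam one), hTone] with x h1 h2 h3 h4 h5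
    rw [hmap] at h1
    rw [h2] at h1
    simp only [Pi.add_apply] at h1
    rw [h3, h4] at h1
    simp only [Pi.smul_apply, smul_eq_mul] at h1
    have hb1 : bq ≤ bq * (S lam one : (Fin d → ℝ) → ℝ) x := by nlinarith [h5.1, h5.2]
    have : g q * ((S lam u₁ : (Fin d → ℝ) → ℝ) x - q) + G g q
        = g q * (S lam u₁ : (Fin d → ℝ) → ℝ) x + bq := by rw [hbqdef]; ring
    rw [this]
    linarith
  have hjensen : ∀ᵐ x ∂μ, G g (v x) ≤ (S lam F : (Fin d → ℝ) → ℝ) x := by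
    have hall := MeasureTheory.ae_all_iff.mpr hrat
    filter_upwards [hall, hvS] with x h1 h2
    rw [← h2]
    exact G_le_of_rat hgLip hgmono _ _ h1
  have key : ∫ x, G g (v x) ∂μ ≤ ∫ x, G g (u x) ∂μ := by
    have h1 : ∫ x, G g (v x) ∂μ ≤ ∫ x, (S lam F : (Fin d → ℝ) → ℝ) x ∂μ :=
      integral_mono_ae hGv_int (L1.integrable_coeFn (S lam F)) hjensen
    have h2 : ∫ x, (S lam F : (Fin d → ℝ) → ℝ) x ∂μ ≤ ‖S lam F‖ := by
      rw [L1.norm_eq_integral_norm]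
      calc ∫ x, (S lam F : (Fin d → ℝ) → ℝ) x ∂μ
          ≤ ∫ x, ‖(S lam F : (Fin d → ℝ) → ℝ) x‖ ∂μ :=
            integral_mono_ae (L1.integrable_coeFn (S lam F))
              (L1.integrable_coeFn (S lam F)).norm
              (Filter.Eventually.of_forall fun x => le_abs_self _)
        _ = _ := rfl
    have h3 : ‖S lam F‖ ≤ ‖F‖ := hScontr lam hlam F
    have h4 : ‖F‖ = ∫ x, G g (u x) ∂μ := by
      rw [L1.norm_eq_integral_norm]
      refine integral_congr_ae ?_
      filter_upwards [hF] with x hx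
      rw [hx, Real.norm_eq_abs, abs_of_nonneg (G_nonneg hgLip hgmono hg0 _)]
    linarith
  have h1 : ∫ x, (G g (u x) - G g (v x)) ∂μ ≤ ∫ x, ((u - v : Lp ℝ 2 μ) x) * gu x ∂μ :=
    integral_mono_ae (hGu_int.sub hGv_int) hprod hpt
  rw [integral_sub hGu_int hGv_int] at h1
  rw [hform]
  linarith
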